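/- Let X_C ⊆ V(G) and let H be a subgraph of G such that X_C is a minimum-size odd cycle transversal of H and each connected component of H contains at most z vertices of X_C (an X_C-certificate of order z). Suppose D is a connected component of H − X_C satisfying: (1) for each x ∈ X_C in the same component H' as D for which H[{x} ∪ V(D)] contains an odd cycle, at least z other components D' of H − X_C satisfy that H[{x} ∪ V(D')] contains an odd cycle; and (2) for each pair of distinct x, y ∈ X_C ∩ V(H') and each parity p, if H[{x,y} ∪ V(D)] contains an x–y path of parity p, then at least z other components D' satisfy that H[{x,y} ∪ V(D')] contains an x–y path of parity p. Then oct(H) = oct(H − V(D)). -/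

import Mathlib

open SimpleGraph

/-- `S` is an odd cycle transversal of `G`: removing `S` leaves a bipartite graph. -/
def IsOCT {W : Type*} (G : SimpleGraph W) (S : Set W) : Prop :=
  (G.induce Sᶜ).Colorable 2

/-- The minimum size of an odd cycle transversal of `G`. -/
noncomputable def oct {W : Type*} (G : SimpleGraph W) : ℕ :=
  sInf {n | ∃ S : Set W, S.ncard = n ∧ IsOCT G S}

/-- `H` is an `XC`-certificate of order `z` in `G`. -/
def IsCert {V : Type*} (G : SimpleGraph V) (H : G.Subgraph) (XC : Set V) (z : ℕ) : Prop :=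
  XC ⊆ H.verts ∧
  IsOCT H.coe {x : ↥H.verts | (x : V) ∈ XC} ∧
  (∀ S : Set ↥H.verts, IsOCT H.coe S → XC.ncard ≤ S.ncard) ∧
  ∀ v : ↥H.verts, {u : ↥H.verts | H.coe.Reachable u v ∧ (u : V) ∈ XC}.ncard ≤ z

/-- `D` is (the vertex set of) a connected component of `H − XC`. -/
def IsDelComp {V : Type*} {G : SimpleGraph V} (H : G.Subgraph) (XC D : Set V) : Prop :=
  ∃ v : ↥(H.deleteVerts XC).verts,
    D = Subtype.val '' {u : ↥(H.deleteVerts XC).verts |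
      (H.deleteVerts XC).coe.Reachable u v}

/-- The subgraph of `H` induced on `S` contains an odd cycle. -/
def OddCycleIn {V : Type*} {G : SimpleGraph V} (H : G.Subgraph) (S : Set V) : Prop :=
  ∃ (v : ↥H.verts) (c : H.coe.Walk v v), c.IsCycle ∧ Odd c.length ∧
    ∀ x ∈ c.support, (x : V) ∈ S

/-- The subgraph of `H` induced on `S` contains an `x`–`y` path of parity `p`. -/
def ParityPathIn {V : Type*} {G : SimpleGraph V} (H : G.Subgraph)
    (x y : V) (S : Set V) (p : ℕ) : Prop :=
  ∃ (hx : x ∈ H.verts) (hy : y ∈ H.verts) (w : H.coe.Walk ⟨x, hx⟩ ⟨y, hy⟩),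
    w.IsPath ∧ w.length % 2 = p ∧ ∀ u ∈ w.support, (u : V) ∈ S

/-- `x` and `d` lie in the same connected component of `H`. -/
def SameCompH {V : Type*} {G : SimpleGraph V} (H : G.Subgraph) (x d : V) : Prop :=
  ∃ (hx : x ∈ H.verts) (hd : d ∈ H.verts), H.coe.Reachable ⟨x, hx⟩ ⟨d, hd⟩


open SimpleGraph.Walk

set_option linter.unusedSectionVars false
set_option linter.unnecessarySimpa false


section A
variable {V : Type*} {G : SimpleGraph V}

theorem color_parity (C : G.Coloring (Fin 2)) {u v : V} (w : G.Walk u v) :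
    C u = C v ↔ w.length % 2 = 0 := by
  induction w with
  | nil => simp
  | @cons a b c h w ih =>
    have ha := (C a).is_lt
    have hb := (C b).is_lt
    have hc := (C c).is_lt
    have hne : (C a).val ≠ (C b).val := by
      have := C.valid h; simpa [Fin.ext_iff] using this
    have ih' : ((C b).val = (C c).val) ↔ w.length % 2 = 0 := by
      simpa [Fin.ext_iff] using ih
    have goal : ((C a).val = (C c).val) ↔ (w.length + 1) % 2 = 0 := by omega
    simpa [Fin.ext_iff, Walk.length_cons] using goal

theorem not_odd_closed_of_colorable (hcol : G.Colorable 2) {v : V} (w : G.Walk v v) :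
    ¬ Odd w.length := by
  obtain ⟨C⟩ := hcol
  have h0 := (color_parity C w).mp rfl
  rw [Nat.odd_iff]
  omega

theorem colorable_two_of_no_odd (h : ∀ (v : V) (w : G.Walk v v), ¬ Odd w.length) :
    G.Colorable 2 := by
  classical
  let rep : V → V := fun v => (G.connectedComponentMk v).out
  have hrch : ∀ v, G.Reachable v (rep v) := by
    intro v
    have : G.connectedComponentMk (rep v) = G.connectedComponentMk v := Quot.out_eq _
    exact (ConnectedComponent.eq.mp this).symm
  have hrep_adj : ∀ {a b : V}, G.Adj a b → rep a = rep b := by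
    intro a b hab
    have : G.connectedComponentMk a = G.connectedComponentMk b :=
      ConnectedComponent.connectedComponentMk_eq_of_adj hab
    simp only [rep, this]
  let len : V → ℕ := fun v => (hrch v).some.length
  refine ⟨Coloring.mk (fun v => (⟨len v % 2, by omega⟩ : Fin 2)) ?_⟩
  intro a b hab heq
  simp only [Fin.mk.injEq] at heq
  have hre : rep a = rep b := hrep_adj hab
  let wa : G.Walk a (rep a) := (hrch a).some
  let wb : G.Walk b (rep a) := (hrch b).some.copy rfl hre.symm
  have hlb : wb.length = len b := by simp [wb, len]
  have hcl := h (rep a) (wa.reverse.append (Walk.cons hab wb))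
  simp only [Walk.length_append, Walk.length_reverse, Walk.length_cons] at hcl
  have hla : wa.length = len a := rfl
  rw [Nat.odd_iff] at hcl
  omega

theorem lift_induce {A : Set V} : ∀ {u v : V} (w : G.Walk u v),
    (∀ x ∈ w.support, x ∈ A) → ∀ (hu : u ∈ A) (hv : v ∈ A),
    ∃ w' : (G.induce A).Walk ⟨u, hu⟩ ⟨v, hv⟩, w'.length = w.length := by
  intro u v w
  induction w with
  | nil => exact fun _ _ _ => ⟨Walk.nil, rfl⟩
  | @cons a b c h w ih =>
    intro hs ha hc
    have hb : b ∈ A := hs b (by simp)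
    obtain ⟨w', hw'⟩ := ih (fun x hx => hs x (by simp [hx])) hb hc
    have hadj : (G.induce A).Adj ⟨a, ha⟩ ⟨b, hb⟩ := h
    exact ⟨Walk.cons hadj w', by simp [hw']⟩

theorem induce_colorable_iff {A : Set V} : (G.induce A).Colorable 2 ↔
    ∀ (u : V) (w : G.Walk u u), (∀ x ∈ w.support, x ∈ A) → ¬ Odd w.length := by
  constructor
  · intro hcol u w hw hodd
    have hu : u ∈ A := hw u w.start_mem_support
    obtain ⟨w', hl⟩ := lift_induce w hw hu hu
    exact not_odd_closed_of_colorable hcol w' (hl ▸ hodd)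
  · intro h
    apply colorable_two_of_no_odd
    rintro ⟨v, hv⟩ w
    have := h v (w.map (SimpleGraph.Embedding.induce A).toHom)
    replace this : (∀ x ∈ (w.map (SimpleGraph.Embedding.induce A).toHom).support, x ∈ A) →
        ¬ Odd w.length :=
      fun hs ho => this hs (by convert ho using 1; exact Walk.length_map _ _)
    apply this
    intro x hx
    rw [Walk.support_map] at hx
    obtain ⟨⟨y, hy⟩, _, rfl⟩ := List.mem_map.mp hx
    exact hy

end A


section B
variable {V : Type*} {G : SimpleGraph V}

theorem path_first_edge {a b c : V} (q : G.Walk a c) (hq : q.IsPath) (he : s(a, b) ∈ q.edges) :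
    ∃ (h : G.Adj a b) (q' : G.Walk b c), q = Walk.cons h q' := by
  cases q with
  | nil => simp at he
  | @cons _ d _ h' q'' =>
    rw [Walk.edges_cons, List.mem_cons] at he
    rcases he with he | he
    · have hd : b = d := by
        rcases Sym2.eq_iff.mp he with ⟨-, h2⟩ | ⟨h1, h2⟩
        · exact h2
        · exact absurd (h1 ▸ h') G.irrefl
      subst hd
      exact ⟨h', q'', rfl⟩
    · exfalso
      have : a ∈ q''.support := Walk.fst_mem_support_of_mem_edges q'' he
      have hnd := hq.support_nodup
      rw [Walk.support_cons] at hnd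
      exact (List.nodup_cons.mp hnd).1 this

/-- Split a walk with a duplicated vertex into a closed walk piece and the rest. -/
theorem walk_split {u v : V} [DecidableEq V] (w : G.Walk u v) (hnd : ¬ w.support.Nodup) :
    ∃ (a : V) (t : G.Walk u a) (c : G.Walk a a) (e : G.Walk a v),
      1 ≤ c.length ∧ t.length + c.length + e.length = w.length ∧
      (∀ x ∈ t.support, x ∈ w.support) ∧ (∀ x ∈ c.support, x ∈ w.support) ∧
      (∀ x ∈ e.support, x ∈ w.support) := by
  obtain ⟨a, ha⟩ : ∃ a, 1 < w.support.count a := by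
    by_contra hc
    push_neg at hc
    exact hnd (List.nodup_iff_count_le_one.mpr hc)
  have haS : a ∈ w.support := by
    by_contra hm
    rw [List.count_eq_zero_of_not_mem hm] at ha
    omega
  have hspec := w.take_spec haS
  have hcount_t := w.count_support_takeUntil_eq_one haS
  have hsupp_eq : w.support = (w.takeUntil a haS).support ++ (w.dropUntil a haS).support.tail := by
    conv_lhs => rw [← hspec]
    rw [Walk.support_append]
  have had : a ∈ (w.dropUntil a haS).support.tail := by
    rw [hsupp_eq, List.count_append, hcount_t] at ha
    have : 0 < (w.dropUntil a haS).support.tail.count a := by omega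
    exact List.count_pos_iff.mp this
  have hlen : (w.takeUntil a haS).length + (w.dropUntil a haS).length = w.length := by
    have h5 := congr_arg Walk.length hspec
    rw [Walk.length_append] at h5
    exact h5
  have htsub := w.support_takeUntil_subset haS
  have hdsub := w.support_dropUntil_subset haS
  set d := w.dropUntil a haS with hd
  cases hdd : d with
  | nil =>
    rw [hdd] at had
    simp at had
  | @cons _ b _ hadj d' =>
    have ha' : a ∈ d'.support := by
      rw [hdd] at had
      simpa using had
    refine ⟨a, w.takeUntil a haS, Walk.cons hadj (d'.takeUntil a ha'), d'.dropUntil a ha',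
      by simp, ?_, fun x hx => htsub hx, ?_, ?_⟩
    · have h2 : (d'.takeUntil a ha').length + (d'.dropUntil a ha').length = d'.length := by
        have h5 := congr_arg Walk.length (d'.take_spec ha')
        rw [Walk.length_append] at h5
        exact h5
      have h3 : d.length = d'.length + 1 := by rw [hdd]; simp
      simp only [Walk.length_cons]
      omega
    · intro x hx
      rw [Walk.support_cons, List.mem_cons] at hx
      rcases hx with rfl | hx
      · exact haS
      · apply hdsub
        rw [hdd, Walk.support_cons]
        exact List.mem_cons_of_mem _ (d'.support_takeUntil_subset ha' hx)
    · intro x hx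
      apply hdsub
      rw [hdd, Walk.support_cons]
      exact List.mem_cons_of_mem _ (d'.support_dropUntil_subset ha' hx)

/-- From any walk: a path of the same parity with support inside, or an odd closed
walk with support inside. -/
theorem exists_parity_path_or_odd {u v : V} (w : G.Walk u v) :
    (∃ p : G.Walk u v, p.IsPath ∧ p.length % 2 = w.length % 2 ∧
      ∀ x ∈ p.support, x ∈ w.support) ∨
    (∃ (a : V) (c : G.Walk a a), Odd c.length ∧ ∀ x ∈ c.support, x ∈ w.support) := by
  classical
  suffices H : ∀ (n : ℕ) {u v : V} (w : G.Walk u v), w.length ≤ n →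
      (∃ p : G.Walk u v, p.IsPath ∧ p.length % 2 = w.length % 2 ∧
        ∀ x ∈ p.support, x ∈ w.support) ∨
      (∃ (a : V) (c : G.Walk a a), Odd c.length ∧ ∀ x ∈ c.support, x ∈ w.support) by
    exact H w.length w le_rfl
  intro n
  induction n with
  | zero =>
    intro u v w hlen
    left
    have : w.support.Nodup := by
      cases w with
      | nil => simp
      | cons h p => simp at hlen
    exact ⟨w, (Walk.isPath_def w).mpr this, rfl, fun x hx => hx⟩
  | succ n ih =>
    intro u v w hlen
    by_cases hnd : w.support.Nodup
    · exact Or.inl ⟨w, (Walk.isPath_def w).mpr hnd, rfl, fun x hx => hx⟩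
    obtain ⟨a, t, c, e, hc1, hsum, hts, hcs, hes⟩ := walk_split w hnd
    by_cases hodd : Odd c.length
    · exact Or.inr ⟨a, c, hodd, hcs⟩
    · have hrec := ih (t.append e) (by rw [Walk.length_append]; omega)
      have hpar : (t.append e).length % 2 = w.length % 2 := by
        rw [Walk.length_append]
        rw [Nat.not_odd_iff_even, Nat.even_iff] at hodd
        omega
      have hsub : ∀ x ∈ (t.append e).support, x ∈ w.support := by
        intro x hx
        rcases (Walk.mem_support_append_iff _ _).mp hx with hx | hx
        · exact hts x hx
        · exact hes x hx
      rcases hrec with ⟨p, hp, hpp, hps⟩ | ⟨a', c', hco, hcs'⟩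
      · exact Or.inl ⟨p, hp, by omega, fun x hx => hsub x (hps x hx)⟩
      · exact Or.inr ⟨a', c', hco, fun x hx => hsub x (hcs' x hx)⟩

/-- Every odd closed walk contains an odd cycle (with support inside). -/
theorem odd_closed_walk_to_cycle {v : V} (w : G.Walk v v) (hw : Odd w.length) :
    ∃ (a : V) (c : G.Walk a a), c.IsCycle ∧ Odd c.length ∧ ∀ x ∈ c.support, x ∈ w.support := by
  classical
  suffices H : ∀ (n : ℕ) {v : V} (w : G.Walk v v), w.length ≤ n → Odd w.length →
      ∃ (a : V) (c : G.Walk a a), c.IsCycle ∧ Odd c.length ∧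
        ∀ x ∈ c.support, x ∈ w.support by
    exact H w.length w le_rfl hw
  intro n
  induction n with
  | zero =>
    intro v w hlen hodd
    exact absurd hodd (by rw [Nat.odd_iff]; omega)
  | succ n ih =>
    intro v w hlen hodd
    cases w with
    | nil => simp [Nat.odd_iff] at hodd
    | @cons _ b _ hadj p =>
      by_cases hnd : p.support.Nodup
      · -- p is a path
        have hp : p.IsPath := (Walk.isPath_def p).mpr hnd
        by_cases he : s(v, b) ∈ p.edges
        · exfalso
          have he' : s(v, b) ∈ p.reverse.edges := by
            rw [Walk.edges_reverse, List.mem_reverse]; exact he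
          obtain ⟨h', q', hq'⟩ := path_first_edge p.reverse hp.reverse he'
          have : q'.IsPath := by
            have := hp.reverse
            rw [hq'] at this
            exact this.of_cons
          have hq'nil : q' = Walk.nil := (Walk.isPath_iff_eq_nil (p := q')).mp this
          have : p.length = 1 := by
            have := congr_arg Walk.length hq'
            rw [hq'nil] at this
            simpa [Walk.length_reverse] using this
          rw [Nat.odd_iff] at hodd
          simp [Walk.length_cons, this] at hodd
        · refine ⟨v, Walk.cons hadj p, ?_, hodd, fun x hx => hx⟩
          exact (Walk.cons_isCycle_iff p hadj).mpr ⟨hp, he⟩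
      · obtain ⟨a, t, c, e, hc1, hsum, hts, hcs, hes⟩ := walk_split p hnd
        have hwlen : (Walk.cons hadj p).length = p.length + 1 := by simp
        by_cases hodd' : Odd c.length
        · obtain ⟨a', c', h1, h2, h3⟩ := ih c (by omega) hodd'
          refine ⟨a', c', h1, h2, fun x hx => ?_⟩
          rw [Walk.support_cons]
          exact List.mem_cons_of_mem _ (hcs x (h3 x hx))
        · have hco : Odd ((Walk.cons hadj (t.append e)).length) := by
            rw [Nat.not_odd_iff_even, Nat.even_iff] at hodd'
            rw [Nat.odd_iff] at hodd ⊢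
            rw [Walk.length_cons, Walk.length_append]
            rw [Walk.length_cons] at hodd
            omega
          obtain ⟨a', c', h1, h2, h3⟩ := ih (Walk.cons hadj (t.append e))
            (by rw [Walk.length_cons, Walk.length_append]; omega) hco
          refine ⟨a', c', h1, h2, fun x hx => ?_⟩
          have hx' := h3 x hx
          rw [Walk.support_cons, List.mem_cons] at hx' ⊢
          rcases hx' with rfl | hx'
          · exact Or.inl rfl
          · rcases (Walk.mem_support_append_iff _ _).mp hx' with h | h
            · exact Or.inr (hts x h)
            · exact Or.inr (hes x h)

end B


section C
variable {V : Type*} [DecidableEq V] {G : SimpleGraph V}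

theorem closed_mem_tail {v x : V} (c : G.Walk v v) (hc : 0 < c.length) :
    x ∈ c.support ↔ x ∈ c.support.tail := by
  constructor
  · intro hx
    rw [c.support_eq_cons, List.mem_cons] at hx
    rcases hx with rfl | hx
    · cases c with
      | nil => simp at hc
      | cons h p => simpa using p.end_mem_support
    · exact hx
  · intro hx
    rw [c.support_eq_cons]
    exact List.mem_cons_of_mem _ hx

theorem length_rotate {u v : V} (c : G.Walk v v) (h : u ∈ c.support) :
    (c.rotate u h).length = c.length := by
  rw [Walk.rotate, Walk.length_append, add_comm]
  have h5 := congr_arg Walk.length (c.take_spec h)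
  rw [Walk.length_append] at h5
  exact h5

theorem mem_support_rotate {u v x : V} (c : G.Walk v v) (h : u ∈ c.support) (hc : 0 < c.length) :
    x ∈ (c.rotate u h).support ↔ x ∈ c.support := by
  rw [closed_mem_tail _ (by rwa [Walk.length_rotate]), closed_mem_tail _ hc]
  exact (support_rotate c u h).mem_iff

/-- Split a cycle at a second vertex into two paths. -/
theorem cycle_split {x y : V} (c : G.Walk x x) (hc : c.IsCycle) (hy : y ∈ c.support)
    (hxy : y ≠ x) :
    ∃ (s1 : G.Walk x y) (s2 : G.Walk y x), s1.IsPath ∧ s2.IsPath ∧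
      s1.length + s2.length = c.length ∧
      (∀ a ∈ s1.support, a ∈ c.support) ∧ (∀ a ∈ s2.support, a ∈ c.support) := by
  refine ⟨c.takeUntil y hy, c.dropUntil y hy, ?_, ?_, ?_,
    fun a ha => c.support_takeUntil_subset hy ha, fun a ha => c.support_dropUntil_subset hy ha⟩
  · -- s1 is a path
    have htail := hc.2  -- c.support.tail.Nodup
    have happ : c.support = (c.takeUntil y hy).support ++ (c.dropUntil y hy).support.tail := by
      conv_lhs => rw [← c.take_spec hy]
      rw [Walk.support_append]
    have hx2 : x ∈ (c.dropUntil y hy).support.tail := by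
      have hx1 : x ∈ (c.dropUntil y hy).support := (c.dropUntil y hy).end_mem_support
      rw [(c.dropUntil y hy).support_eq_cons, List.mem_cons] at hx1
      rcases hx1 with heq | hx1
      · exact absurd heq.symm hxy
      · exact hx1
    have htailnd : ((c.takeUntil y hy).support.tail ++ (c.dropUntil y hy).support.tail).Nodup := by
      have : c.support.tail = (c.takeUntil y hy).support.tail ++
          (c.dropUntil y hy).support.tail := by
        rw [happ, (c.takeUntil y hy).support_eq_cons]
        simp
      rwa [this] at htail
    have hdisj := List.disjoint_of_nodup_append htailnd
    rw [Walk.isPath_def, (c.takeUntil y hy).support_eq_cons]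
    refine List.nodup_cons.mpr ⟨fun hmem => ?_, (List.nodup_append.mp htailnd).1⟩
    exact hdisj hmem hx2
  · -- s2 is a path
    have htail := hc.2
    have happ : c.support = (c.takeUntil y hy).support ++ (c.dropUntil y hy).support.tail := by
      conv_lhs => rw [← c.take_spec hy]
      rw [Walk.support_append]
    have htailnd : ((c.takeUntil y hy).support.tail ++ (c.dropUntil y hy).support.tail).Nodup := by
      have : c.support.tail = (c.takeUntil y hy).support.tail ++
          (c.dropUntil y hy).support.tail := by
        rw [happ, (c.takeUntil y hy).support_eq_cons]
        simp
      rwa [this] at htail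
    have hdisj := List.disjoint_of_nodup_append htailnd
    have hy1 : y ∈ (c.takeUntil y hy).support.tail := by
      have := (c.takeUntil y hy).end_mem_support
      rw [(c.takeUntil y hy).support_eq_cons, List.mem_cons] at this
      rcases this with heq | h1
      · exact absurd heq hxy
      · exact h1
    rw [Walk.isPath_def, (c.dropUntil y hy).support_eq_cons]
    refine List.nodup_cons.mpr ⟨fun hmem => ?_, (List.nodup_append.mp htailnd).2.1⟩
    exact hdisj hy1 hmem
  · have h5 := congr_arg Walk.length (c.take_spec hy)
    rw [Walk.length_append] at h5
    exact h5

/-- If a path equals an append, the start does not appear in the right part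
(unless it is the junction). -/
theorem path_start_not_mem_right {u m v : V} (q1 : G.Walk u m) (q2 : G.Walk m v)
    (hq : (q1.append q2).IsPath) (hum : u ≠ m) : u ∉ q2.support := by
  intro hmem
  have hnd := hq.support_nodup
  rw [Walk.support_append] at hnd
  have hdisj := List.disjoint_of_nodup_append hnd
  have hu1 : u ∈ q1.support := q1.start_mem_support
  have hu2 : u ∈ q2.support.tail := by
    rw [q2.support_eq_cons, List.mem_cons] at hmem
    rcases hmem with rfl | h
    · exact absurd rfl hum
    · exact h
  exact hdisj hu1 hu2

/-- Walks exit a set `A` only through `B`. -/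
theorem exit_split {A B : Set V} (hAB : ∀ {a b : V}, G.Adj a b → a ∈ A → b ∈ A ∨ b ∈ B) :
    ∀ {d t : V} (w : G.Walk d t), d ∈ A → t ∉ A →
    ∃ (y : V) (w1 : G.Walk d y) (w2 : G.Walk y t), y ∈ B ∧ w = w1.append w2 ∧
      (∀ x ∈ w1.support, x ∈ A ∨ x = y) := by
  intro d t w
  induction w with
  | nil => exact fun hd ht => absurd hd ht
  | @cons a b c h w' ih =>
    intro hd ht
    by_cases hbA : b ∈ A
    · obtain ⟨y, w1, w2, hyB, heq, hsup⟩ := ih hbA ht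
      refine ⟨y, Walk.cons h w1, w2, hyB, by rw [Walk.cons_append, ← heq], ?_⟩
      intro x hx
      rw [Walk.support_cons, List.mem_cons] at hx
      rcases hx with rfl | hx
      · exact Or.inl hd
      · exact hsup x hx
    · have hyB : b ∈ B := (hAB h hd).resolve_left hbA
      refine ⟨b, Walk.cons h Walk.nil, w', hyB, by simp, ?_⟩
      intro x hx
      simp only [Walk.support_cons, Walk.support_nil, List.mem_cons] at hx
      rcases hx with rfl | hx | hx
      · exact Or.inl hd
      · simp [hx]
      · simp at hx

theorem path_end_not_mem_left {u m v : V} (q1 : G.Walk u m) (q2 : G.Walk m v)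
    (hq : (q1.append q2).IsPath) (hvm : v ≠ m) : v ∉ q1.support := by
  intro hmem
  have hnd := hq.support_nodup
  rw [Walk.support_append] at hnd
  have hdisj := List.disjoint_of_nodup_append hnd
  have hv2 : v ∈ q2.support.tail := by
    have h1 : v ∈ q2.support := q2.end_mem_support
    rw [q2.support_eq_cons, List.mem_cons] at h1
    rcases h1 with rfl | h1
    · exact absurd rfl hvm
    · exact h1
  exact hdisj hmem hv2

theorem mem_support_reachable {u v a : V} (w : G.Walk u v) (ha : a ∈ w.support) :
    G.Reachable u a := ⟨w.takeUntil a ha⟩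

end C

section D
variable {V : Type*} {G : SimpleGraph V} {H : G.Subgraph}

theorem del_adj_down {X : Set V} {a b : ↥((H.deleteVerts X).verts)}
    (h : (H.deleteVerts X).coe.Adj a b) :
    H.coe.Adj ⟨a.1, a.2.1⟩ ⟨b.1, b.2.1⟩ := by
  simp only [Subgraph.coe_adj, Subgraph.deleteVerts_adj] at h ⊢
  exact h.2.2.2.2

theorem del_adj_up {X : Set V} {a b : ↥H.verts} (h : H.coe.Adj a b)
    (ha : (a : V) ∉ X) (hb : (b : V) ∉ X) :
    (H.deleteVerts X).coe.Adj ⟨a.1, ⟨a.2, ha⟩⟩ ⟨b.1, ⟨b.2, hb⟩⟩ := by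
  simp only [Subgraph.coe_adj, Subgraph.deleteVerts_adj] at h ⊢
  exact ⟨a.2, ha, b.2, hb, h⟩

theorem del_walk_down {X : Set V} {u v : ↥((H.deleteVerts X).verts)}
    (w : (H.deleteVerts X).coe.Walk u v) :
    ∃ w' : H.coe.Walk ⟨u.1, u.2.1⟩ ⟨v.1, v.2.1⟩, w'.length = w.length ∧
      ∀ x ∈ w'.support, ∃ y ∈ w.support, (y : ↥((H.deleteVerts X).verts)).1 = x.1 := by
  induction w with
  | nil => exact ⟨Walk.nil, rfl, by simp⟩
  | @cons a b c h w ih =>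
    obtain ⟨w', hl, hs⟩ := ih
    refine ⟨Walk.cons (del_adj_down h) w', by simp [hl], ?_⟩
    intro x hx
    rw [Walk.support_cons, List.mem_cons] at hx
    rcases hx with rfl | hx
    · exact ⟨a, by simp⟩
    · obtain ⟨y, hy, hy2⟩ := hs x hx
      exact ⟨y, by simp [hy], hy2⟩

theorem del_walk_up {X : Set V} : ∀ {u v : ↥H.verts} (w : H.coe.Walk u v),
    (∀ x ∈ w.support, (x : V) ∉ X) → ∀ (hu : (u : V) ∉ X) (hv : (v : V) ∉ X),
    ∃ w' : (H.deleteVerts X).coe.Walk ⟨u.1, ⟨u.2, hu⟩⟩ ⟨v.1, ⟨v.2, hv⟩⟩,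
      w'.length = w.length ∧
      ∀ x ∈ w'.support, ∃ y ∈ w.support, (y : V) = (x : ↥((H.deleteVerts X).verts)).1 := by
  intro u v w
  induction w with
  | nil => exact fun _ _ _ => ⟨Walk.nil, rfl, by simp⟩
  | @cons a b c h w ih =>
    intro hsup ha hc
    have hb : (b : V) ∉ X := hsup b (by simp)
    obtain ⟨w', hl, hs⟩ := ih (fun x hx => hsup x (by simp [hx])) hb hc
    refine ⟨Walk.cons (del_adj_up h ha hb) w', by simp [hl], ?_⟩
    intro x hx
    rw [Walk.support_cons, List.mem_cons] at hx
    rcases hx with rfl | hx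
    · exact ⟨a, by simp⟩
    · obtain ⟨y, hy, hy2⟩ := hs x hx
      exact ⟨y, by simp [hy], hy2⟩

theorem del_reachable_down {X : Set V} {u v : ↥((H.deleteVerts X).verts)}
    (h : (H.deleteVerts X).coe.Reachable u v) :
    H.coe.Reachable ⟨u.1, u.2.1⟩ ⟨v.1, v.2.1⟩ := by
  obtain ⟨w⟩ := h
  obtain ⟨w', -, -⟩ := del_walk_down w
  exact ⟨w'⟩

variable {XC D : Set V}

theorem DelComp.subset (hD : IsDelComp H XC D) : D ⊆ H.verts \ XC := by
  obtain ⟨v, rfl⟩ := hD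
  rintro a ⟨u, -, rfl⟩
  exact u.2

theorem DelComp.nonempty (hD : IsDelComp H XC D) : D.Nonempty := by
  obtain ⟨v, rfl⟩ := hD
  exact ⟨v.1, v, by simp [Reachable.refl], rfl⟩

theorem DelComp.conn (hD : IsDelComp H XC D) (a b : ↥H.verts)
    (ha : (a : V) ∈ D) (hb : (b : V) ∈ D) : H.coe.Reachable a b := by
  obtain ⟨v, rfl⟩ := hD
  obtain ⟨a', ha', haa⟩ := ha
  obtain ⟨b', hb', hbb⟩ := hb
  have h1 : (H.deleteVerts XC).coe.Reachable a' b' := ha'.trans hb'.symm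
  have h2 := del_reachable_down h1
  have ea : (⟨a'.1, a'.2.1⟩ : ↥H.verts) = a := Subtype.ext haa
  have eb : (⟨b'.1, b'.2.1⟩ : ↥H.verts) = b := Subtype.ext hbb
  rwa [ea, eb] at h2

theorem DelComp.closure (hD : IsDelComp H XC D) (a b : ↥H.verts)
    (ha : (a : V) ∈ D) (hadj : H.coe.Adj a b) (hb : (b : V) ∉ XC) : (b : V) ∈ D := by
  obtain ⟨v, rfl⟩ := hD
  obtain ⟨a', ha', haa⟩ := ha
  have haX : (a : V) ∉ XC := haa ▸ a'.2.2
  have hadj' := del_adj_up (X := XC) hadj haX hb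
  have hae : a' = ⟨a.1, ⟨a.2, haX⟩⟩ := Subtype.ext haa
  rw [hae] at ha'
  refine ⟨⟨b.1, ⟨b.2, hb⟩⟩, ?_, rfl⟩
  exact (hadj'.reachable.symm).trans ha'

theorem DelComp.eq_of_mem {D1 D2 : Set V} (h1 : IsDelComp H XC D1)
    (h2 : IsDelComp H XC D2) {a : V} (ha1 : a ∈ D1) (ha2 : a ∈ D2) : D1 = D2 := by
  obtain ⟨v1, rfl⟩ := h1
  obtain ⟨v2, rfl⟩ := h2
  obtain ⟨u1, hu1, e1⟩ := ha1
  obtain ⟨u2, hu2, e2⟩ := ha2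
  have : u1 = u2 := Subtype.ext (e1.trans e2.symm)
  subst this
  have hv : (H.deleteVerts XC).coe.Reachable v1 v2 := hu1.symm.trans hu2
  have hset : {u : ↥(H.deleteVerts XC).verts | (H.deleteVerts XC).coe.Reachable u v1} =
      {u | (H.deleteVerts XC).coe.Reachable u v2} := by
    ext u
    exact ⟨fun h => h.trans hv, fun h => h.trans hv.symm⟩
  rw [hset]

end D


section E1
variable {V : Type} [Fintype V] {G : SimpleGraph V} {H : G.Subgraph} {XC D : Set V} {z : ℕ}

theorem cnt_exists_free (v₀ : ↥H.verts) (S : Set ↥H.verts)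
    (hSR : {a : ↥H.verts | a ∈ S ∧ H.coe.Reachable a v₀}.ncard < z)
    (𝒟 : Set (Set V)) (hz : z ≤ 𝒟.ncard)
    (hcomp : ∀ A ∈ 𝒟, IsDelComp H XC A)
    (hR : ∀ A ∈ 𝒟, ∃ a ∈ A, ∃ (ha : a ∈ H.verts), H.coe.Reachable ⟨a, ha⟩ v₀) :
    ∃ A ∈ 𝒟, ∀ s : ↥H.verts, s ∈ S → (s : V) ∉ A := by
  classical
  by_contra hcon
  push_neg at hcon
  choose f hfS hfA using hcon
  set g : Set V → ↥H.verts := fun A => if h : A ∈ 𝒟 then f A h else v₀ with hg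
  have hmapsto : ∀ A ∈ 𝒟, g A ∈ {a : ↥H.verts | a ∈ S ∧ H.coe.Reachable a v₀} := by
    intro A hA
    simp only [hg, dif_pos hA]
    refine ⟨hfS A hA, ?_⟩
    obtain ⟨a, haA, ha, har⟩ := hR A hA
    have h1 : H.coe.Reachable (f A hA) ⟨a, ha⟩ :=
      DelComp.conn (hcomp A hA) _ _ (hfA A hA) haA
    exact h1.trans har
  have hinj : Set.InjOn g 𝒟 := by
    intro A1 h1 A2 h2 he
    simp only [hg, dif_pos h1, dif_pos h2] at he
    have h3 : ((f A1 h1 : ↥H.verts) : V) ∈ A2 := by rw [he]; exact hfA A2 h2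
    exact DelComp.eq_of_mem (hcomp A1 h1) (hcomp A2 h2) (hfA A1 h1) h3
  have := Set.ncard_le_ncard_of_injOn g hmapsto hinj (Set.toFinite _)
  omega

theorem oddCycleIn_anatomy {A : Set V} (hA : IsDelComp H XC A)
    (hfree : ∀ (u : ↥H.verts) (w : H.coe.Walk u u),
      (∀ a ∈ w.support, (a : V) ∉ XC) → ¬ Odd w.length)
    {x : ↥H.verts} (hx : (x : V) ∈ XC) (h : OddCycleIn H (insert (x : V) A)) :
    ∃ (v : ↥H.verts) (c : H.coe.Walk v v), Odd c.length ∧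
      (∀ a ∈ c.support, a = x ∨ (a : V) ∈ A) ∧ x ∈ c.support ∧
      ∃ a ∈ c.support, (a : V) ∈ A := by
  obtain ⟨v, c, hcyc, hodd, hsub⟩ := h
  have hsub' : ∀ a ∈ c.support, a = x ∨ (a : V) ∈ A := by
    intro a ha
    rcases Set.mem_insert_iff.mp (hsub a ha) with h1 | h1
    · exact Or.inl (Subtype.ext h1)
    · exact Or.inr h1
  have hxc : x ∈ c.support := by
    by_contra hxc
    refine hfree v c (fun a ha => ?_) hodd
    rcases hsub' a ha with rfl | h1
    · exact absurd ha hxc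
    · exact fun hX => ((DelComp.subset hA) h1).2 hX
  refine ⟨v, c, hodd, hsub', hxc, ?_⟩
  cases c with
  | nil => simp [Nat.odd_iff] at hodd
  | @cons _ b _ hadj p =>
    have hvb : v ≠ b := hadj.ne
    by_cases hvx : v = x
    · rcases hsub' b (by simp) with hbx | h1
      · exact absurd (hvx.trans hbx.symm) hvb
      · exact ⟨b, by simp, h1⟩
    · rcases hsub' v (by simp) with h1 | h1
      · exact absurd h1 hvx
      · exact ⟨v, by simp, h1⟩

theorem kill1 (hD : IsDelComp H XC D) (v₀ : ↥H.verts) (S : Set ↥H.verts)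
    (hfree : ∀ (u : ↥H.verts) (w : H.coe.Walk u u),
      (∀ a ∈ w.support, (a : V) ∉ XC) → ¬ Odd w.length)
    (PS : ∀ (u : ↥H.verts) (w : H.coe.Walk u u),
      (∀ a ∈ w.support, a ∉ S ∧ (a : V) ∉ D) → ¬ Odd w.length)
    (hSR : {a : ↥H.verts | a ∈ S ∧ H.coe.Reachable a v₀}.ncard < z)
    (x : ↥H.verts) (hx : (x : V) ∈ XC) (hxS : x ∉ S) (hxR : H.coe.Reachable x v₀)
    (hz : z ≤ {D' : Set V | IsDelComp H XC D' ∧ D' ≠ D ∧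
      OddCycleIn H (insert (x : V) D')}.ncard) :
    False := by
  classical
  have hR : ∀ A ∈ {D' : Set V | IsDelComp H XC D' ∧ D' ≠ D ∧
      OddCycleIn H (insert (x : V) D')}, ∃ a ∈ A, ∃ (ha : a ∈ H.verts),
      H.coe.Reachable ⟨a, ha⟩ v₀ := by
    intro A hA
    obtain ⟨v, c, hodd, hsub, hxc, a, hac, haA⟩ := oddCycleIn_anatomy hA.1 hfree hx hA.2.2
    refine ⟨(a : V), haA, a.2, ?_⟩
    have h1 : H.coe.Reachable a x :=
      (mem_support_reachable c hac).symm.trans (mem_support_reachable c hxc)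
    exact h1.trans hxR
  obtain ⟨A, hA, hAfree⟩ := cnt_exists_free v₀ S hSR _ hz (fun A hA => hA.1) hR
  obtain ⟨v, c, hodd, hsub, hxc, -⟩ := oddCycleIn_anatomy hA.1 hfree hx hA.2.2
  refine PS v c (fun a ha => ?_) hodd
  rcases hsub a ha with rfl | h1
  · exact ⟨hxS, fun hInD => ((DelComp.subset hD) hInD).2 hx⟩
  · refine ⟨fun haS => hAfree a haS h1, fun hInD => ?_⟩
    exact hA.2.1 (DelComp.eq_of_mem hA.1 hD h1 hInD)

theorem parityPathIn_anatomy {A : Set V} {x y : ↥H.verts} (hxy : x ≠ y) {p₀ : ℕ}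
    (hcase : ¬ (H.coe.Adj x y ∧ p₀ = 1))
    (h : ParityPathIn H (x : V) (y : V) (insert (x : V) (insert (y : V) A)) p₀) :
    ∃ a : ↥H.verts, (a : V) ∈ A ∧ H.coe.Reachable a x := by
  classical
  obtain ⟨hx', hy', w, hpath, hpar, hsub⟩ := h
  have hex : (⟨(x : V), hx'⟩ : ↥H.verts) = x := Subtype.ext rfl
  have hey : (⟨(y : V), hy'⟩ : ↥H.verts) = y := Subtype.ext rfl
  by_cases hA0 : ∃ a ∈ w.support, (a : V) ∈ A
  · obtain ⟨a, haw, haA⟩ := hA0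
    refine ⟨a, haA, ?_⟩
    have h1 := (mem_support_reachable w haw).symm
    rwa [hex] at h1
  · exfalso
    push_neg at hA0
    have hsub2 : ∀ a ∈ w.support, a = (⟨(x : V), hx'⟩ : ↥H.verts) ∨
        a = ⟨(y : V), hy'⟩ := by
      intro a ha
      rcases Set.mem_insert_iff.mp (hsub a ha) with h1 | h1
      · exact Or.inl (Subtype.ext h1)
      rcases Set.mem_insert_iff.mp h1 with h2 | h2
      · exact Or.inr (Subtype.ext h2)
      · exact absurd h2 (hA0 a ha)
    have hnd := hpath.support_nodup
    have hfs : w.support.toFinset ⊆ {(⟨(x : V), hx'⟩ : ↥H.verts), ⟨(y : V), hy'⟩} := by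
      intro a ha
      rw [List.mem_toFinset] at ha
      rcases hsub2 a ha with rfl | rfl <;> simp
    have hcard : w.support.toFinset.card ≤ 2 := by
      refine (Finset.card_le_card hfs).trans ?_
      exact (Finset.card_insert_le _ _).trans (by simp)
    rw [List.toFinset_card_of_nodup hnd, Walk.length_support] at hcard
    have hne : w.length ≠ 0 := by
      intro h0
      have := Walk.eq_of_length_eq_zero h0
      rw [hex, hey] at this
      exact hxy this
    have hlen1 : w.length = 1 := by omega
    have hadj := Walk.adj_of_length_eq_one hlen1
    rw [hex, hey] at hadj
    refine hcase ⟨hadj, ?_⟩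
    rw [hlen1] at hpar
    simpa using hpar.symm

theorem surgery (hD : IsDelComp H XC D) (v₀ : ↥H.verts) (hv₀ : (v₀ : V) ∈ D)
    (S : Set ↥H.verts)
    (hfree : ∀ (u : ↥H.verts) (w : H.coe.Walk u u),
      (∀ a ∈ w.support, (a : V) ∉ XC) → ¬ Odd w.length)
    (PS : ∀ (u : ↥H.verts) (w : H.coe.Walk u u),
      (∀ a ∈ w.support, a ∉ S ∧ (a : V) ∉ D) → ¬ Odd w.length)
    (hSR : {a : ↥H.verts | a ∈ S ∧ H.coe.Reachable a v₀}.ncard < z)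
    (crit1 : ∀ x ∈ XC, (∃ d ∈ D, SameCompH H x d) →
      OddCycleIn H (insert x D) →
      z ≤ {D' : Set V | IsDelComp H XC D' ∧ D' ≠ D ∧
            OddCycleIn H (insert x D')}.ncard)
    (crit2 : ∀ x ∈ XC, ∀ y ∈ XC, x ≠ y →
      (∃ d ∈ D, SameCompH H x d) → (∃ d ∈ D, SameCompH H y d) →
      ∀ p : ℕ, ParityPathIn H x y (insert x (insert y D)) p →
        z ≤ {D' : Set V | IsDelComp H XC D' ∧ D' ≠ D ∧
              ParityPathIn H x y (insert x (insert y D')) p}.ncard)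
    (x : ↥H.verts) (hx : (x : V) ∈ XC) (c2 : H.coe.Walk x x) (hcyc : c2.IsCycle)
    (hodd : Odd c2.length) (hcS : ∀ a ∈ c2.support, a ∉ S)
    (hreach : ∀ a ∈ c2.support, H.coe.Reachable a v₀)
    (d : ↥H.verts) (hdc : d ∈ c2.support) (hdD : (d : V) ∈ D) :
    ∃ (u' : ↥H.verts) (w' : H.coe.Walk u' u'), Odd w'.length ∧
      (∀ a ∈ w'.support, a ∉ S) ∧
      {a : ↥H.verts | a ∈ w'.support ∧ (a : V) ∈ D} ⊂
        {a : ↥H.verts | a ∈ c2.support ∧ (a : V) ∈ D} := by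
  classical
  have hDXC : ∀ {a : V}, a ∈ D → a ∉ XC := fun ha => ((DelComp.subset hD) ha).2
  cases c2 with
  | nil => simp [Nat.odd_iff] at hodd
  | @cons _ b _ hadj p =>
    have hdx : d ≠ x := fun h => hDXC hdD (by rw [h]; exact hx)
    have hp : p.IsPath := by
      rw [Walk.isPath_def]
      simpa using hcyc.support_nodup
    have hdp : d ∈ p.support := by
      have h1 := hdc
      rw [Walk.support_cons, List.mem_cons] at h1
      rcases h1 with h1 | h1
      · exact absurd h1 hdx
      · exact h1
    set q1 := p.takeUntil d hdp with hq1def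
    set q2 := p.dropUntil d hdp with hq2def
    have hpspec : q1.append q2 = p := p.take_spec hdp
    have hq2path : q2.IsPath := hp.dropUntil hdp
    have hxd : x ≠ d := fun h => hdx h.symm
    have hxq1 : x ∉ q1.support :=
      path_end_not_mem_left q1 q2 (by rw [hpspec]; exact hp) hxd
    have hq1path : q1.IsPath := hp.takeUntil hdp
    have hrpath : (Walk.cons hadj q1).IsPath := by
      rw [Walk.isPath_def, Walk.support_cons]
      exact List.nodup_cons.mpr ⟨hxq1, hq1path.support_nodup⟩
    set r' := (Walk.cons hadj q1).reverse with hr'def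
    have hr'path : r'.IsPath := hrpath.reverse
    have hAB : ∀ {a b : ↥H.verts}, H.coe.Adj a b →
        a ∈ {a : ↥H.verts | (a : V) ∈ D} → b ∈ {a : ↥H.verts | (a : V) ∈ D} ∨
        b ∈ {a : ↥H.verts | (a : V) ∈ XC} := by
      intro a b hab haD
      by_cases hbX : (b : V) ∈ XC
      · exact Or.inr hbX
      · exact Or.inl (DelComp.closure hD a b haD hab hbX)
    obtain ⟨x', a1, a2, hx'XC, hr'eq, ha1sub⟩ :=
      exit_split (fun hab ha => hAB hab ha) r' hdD (fun h => hDXC h hx)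
    obtain ⟨y', b1, b2, hy'XC, hq2eq, hb1sub⟩ :=
      exit_split (fun hab ha => hAB hab ha) q2 hdD (fun h => hDXC h hx)
    rw [Set.mem_setOf_eq] at hx'XC hy'XC
    -- membership plumbing
    have hrsupp : ∀ a, a ∈ r'.support ↔ a = x ∨ a ∈ q1.support := by
      intro a
      rw [hr'def, Walk.support_reverse, List.mem_reverse, Walk.support_cons, List.mem_cons]
    have hcin : ∀ a, a = x ∨ a ∈ q1.support ∨ a ∈ q2.support →
        a ∈ (Walk.cons hadj p).support := by
      intro a h1
      rw [Walk.support_cons, List.mem_cons]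
      rcases h1 with rfl | h1 | h1
      · exact Or.inl rfl
      · exact Or.inr (by rw [← hpspec]; exact (Walk.mem_support_append_iff q1 q2).mpr (Or.inl h1))
      · exact Or.inr (by rw [← hpspec]; exact (Walk.mem_support_append_iff q1 q2).mpr (Or.inr h1))
    have ha1r : ∀ a ∈ a1.support, a ∈ r'.support := by
      intro a ha; rw [hr'eq]; exact (Walk.mem_support_append_iff a1 a2).mpr (Or.inl ha)
    have ha2r : ∀ a ∈ a2.support, a ∈ r'.support := by
      intro a ha; rw [hr'eq]; exact (Walk.mem_support_append_iff a1 a2).mpr (Or.inr ha)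
    have hb1q : ∀ a ∈ b1.support, a ∈ q2.support := by
      intro a ha; rw [hq2eq]; exact (Walk.mem_support_append_iff b1 b2).mpr (Or.inl ha)
    have hb2q : ∀ a ∈ b2.support, a ∈ q2.support := by
      intro a ha; rw [hq2eq]; exact (Walk.mem_support_append_iff b1 b2).mpr (Or.inr ha)
    have ha1c : ∀ a ∈ a1.support, a ∈ (Walk.cons hadj p).support := by
      intro a ha
      rcases (hrsupp a).mp (ha1r a ha) with rfl | h1
      · exact hcin a (Or.inl rfl)
      · exact hcin a (Or.inr (Or.inl h1))
    have ha2c : ∀ a ∈ a2.support, a ∈ (Walk.cons hadj p).support := by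
      intro a ha
      rcases (hrsupp a).mp (ha2r a ha) with rfl | h1
      · exact hcin a (Or.inl rfl)
      · exact hcin a (Or.inr (Or.inl h1))
    have hb1c : ∀ a ∈ b1.support, a ∈ (Walk.cons hadj p).support :=
      fun a ha => hcin a (Or.inr (Or.inr (hb1q a ha)))
    have hb2c : ∀ a ∈ b2.support, a ∈ (Walk.cons hadj p).support :=
      fun a ha => hcin a (Or.inr (Or.inr (hb2q a ha)))
    have hx'mem : x' ∈ (Walk.cons hadj p).support := ha1c x' a1.end_mem_support
    have hy'mem : y' ∈ (Walk.cons hadj p).support := hb1c y' b1.end_mem_support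
    have hx'S : x' ∉ S := hcS x' hx'mem
    have hy'S : y' ∉ S := hcS y' hy'mem
    have hx'R : H.coe.Reachable x' v₀ := hreach x' hx'mem
    have hy'R : H.coe.Reachable y' v₀ := hreach y' hy'mem
    -- lengths
    have hlenr' : r'.length = a1.length + a2.length := by
      rw [hr'eq, Walk.length_append]
    have hlenq2 : q2.length = b1.length + b2.length := by
      rw [hq2eq, Walk.length_append]
    have hlenp : q1.length + q2.length = p.length := by
      have h5 := congr_arg Walk.length hpspec
      rw [Walk.length_append] at h5
      exact h5
    have hlenr'2 : r'.length = q1.length + 1 := by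
      rw [hr'def, Walk.length_reverse, Walk.length_cons]
    have hlenc2 : (Walk.cons hadj p).length = p.length + 1 := Walk.length_cons _ _
    -- d not in the outer parts
    have hdx' : d ≠ x' := fun h => hDXC hdD (by rw [h]; exact hx'XC)
    have hdy' : d ≠ y' := fun h => hDXC hdD (by rw [h]; exact hy'XC)
    have hda2 : d ∉ a2.support :=
      path_start_not_mem_right a1 a2 (by rw [← hr'eq]; exact hr'path) hdx'
    have hdb2 : d ∉ b2.support :=
      path_start_not_mem_right b1 b2 (by rw [← hq2eq]; exact hq2path) hdy'
    -- crit-witnesses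
    have hdR : H.coe.Reachable d v₀ := hreach d hdc
    have hwitx : ∃ dd ∈ D, SameCompH H (x' : V) dd :=
      ⟨(d : V), hdD, x'.2, d.2, hx'R.trans hdR.symm⟩
    have hwity : ∃ dd ∈ D, SameCompH H (y' : V) dd :=
      ⟨(d : V), hdD, y'.2, d.2, hy'R.trans hdR.symm⟩
    have hXCnotD : ∀ {a : ↥H.verts}, (a : V) ∈ XC → (a : V) ∉ D :=
      fun hXa hDa => hDXC hDa hXa
    -- the segment
    have hsegsub : ∀ a, (a ∈ a1.support ∨ a ∈ b1.support) →
        ((a : V) ∈ D ∨ a = x' ∨ a = y') := by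
      intro a h1
      rcases h1 with h1 | h1
      · rcases ha1sub a h1 with h2 | h2
        · exact Or.inl h2
        · exact Or.inr (Or.inl h2)
      · rcases hb1sub a h1 with h2 | h2
        · exact Or.inl h2
        · exact Or.inr (Or.inr h2)
    by_cases hxy' : x' = y'
    · subst hxy'
      by_cases hsegodd : Odd (a1.length + b1.length)
      · -- global kill via crit1
        exfalso
        have hcsegodd : Odd ((a1.reverse.append b1).length) := by
          rwa [Walk.length_append, Walk.length_reverse]
        obtain ⟨a'', c3, hc3cyc, hc3odd, hc3sub⟩ :=
          odd_closed_walk_to_cycle (a1.reverse.append b1) hcsegodd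
        have hc3in : ∀ a ∈ c3.support, (a : V) ∈ D ∨ a = x' := by
          intro a ha
          have h1 := hc3sub a ha
          rcases (Walk.mem_support_append_iff a1.reverse b1).mp h1 with h2 | h2
          · rw [Walk.support_reverse, List.mem_reverse] at h2
            rcases hsegsub a (Or.inl h2) with h3 | h3 | h3
            · exact Or.inl h3
            · exact Or.inr h3
            · exact Or.inr h3
          · rcases hsegsub a (Or.inr h2) with h3 | h3 | h3
            · exact Or.inl h3
            · exact Or.inr h3
            · exact Or.inr h3
        have hOC : OddCycleIn H (insert (x' : V) D) := by
          refine ⟨a'', c3, hc3cyc, hc3odd, fun a ha => ?_⟩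
          rcases hc3in a ha with h1 | h1
          · exact Set.mem_insert_of_mem _ h1
          · rw [h1]
            exact Set.mem_insert _ _
        exact kill1 hD v₀ S hfree PS hSR x' hx'XC hx'S hx'R
          (crit1 (x' : V) hx'XC hwitx hOC)
      · -- even segment: delete it
        refine ⟨x, a2.reverse.append b2, ?_, ?_, ?_⟩
        · rw [Walk.length_append, Walk.length_reverse]
          rw [Nat.odd_iff] at hodd ⊢
          rw [Nat.not_odd_iff_even, Nat.even_iff] at hsegodd
          omega
        · intro a ha
          rcases (Walk.mem_support_append_iff a2.reverse b2).mp ha with h1 | h1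
          · rw [Walk.support_reverse, List.mem_reverse] at h1
            exact hcS a (ha2c a h1)
          · exact hcS a (hb2c a h1)
        · rw [Set.ssubset_def]
          constructor
          · rintro a ⟨ha1, ha2⟩
            refine ⟨?_, ha2⟩
            rcases (Walk.mem_support_append_iff a2.reverse b2).mp ha1 with h1 | h1
            · rw [Walk.support_reverse, List.mem_reverse] at h1
              exact ha2c a h1
            · exact hb2c a h1
          · intro hcon
            have hdmem := hcon ⟨hdc, hdD⟩
            rcases (Walk.mem_support_append_iff a2.reverse b2).mp hdmem.1 with h1 | h1
            · rw [Walk.support_reverse, List.mem_reverse] at h1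
              exact hda2 h1
            · exact hdb2 h1
    · -- x' ≠ y'
      set p₀ := (a1.length + b1.length) % 2 with hp₀def
      by_cases hbp : H.coe.Adj x' y' ∧ p₀ = 1
      · -- bypass with a single edge
        refine ⟨x, a2.reverse.append ((Walk.cons hbp.1 Walk.nil).append b2), ?_, ?_, ?_⟩
        · simp only [Walk.length_append, Walk.length_reverse, Walk.length_cons,
            Walk.length_nil]
          rw [Nat.odd_iff] at hodd ⊢
          have h6 := hbp.2
          rw [hp₀def] at h6
          omega
        · intro a ha
          rcases (Walk.mem_support_append_iff _ _).mp ha with h1 | h1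
          · rw [Walk.support_reverse, List.mem_reverse] at h1
            exact hcS a (ha2c a h1)
          rcases (Walk.mem_support_append_iff _ _).mp h1 with h1 | h1
          · simp only [Walk.support_cons, Walk.support_nil, List.mem_cons,
              List.mem_singleton] at h1
            rcases h1 with rfl | rfl | h1
            · exact hx'S
            · exact hy'S
            · simp at h1
          · exact hcS a (hb2c a h1)
        · rw [Set.ssubset_def]
          constructor
          · rintro a ⟨ha1, ha2⟩
            refine ⟨?_, ha2⟩
            rcases (Walk.mem_support_append_iff _ _).mp ha1 with h1 | h1
            · rw [Walk.support_reverse, List.mem_reverse] at h1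
              exact ha2c a h1
            rcases (Walk.mem_support_append_iff _ _).mp h1 with h1 | h1
            · simp only [Walk.support_cons, Walk.support_nil, List.mem_cons,
                List.mem_singleton] at h1
              rcases h1 with rfl | rfl | h1
              · exact absurd ha2 (hXCnotD hx'XC)
              · exact absurd ha2 (hXCnotD hy'XC)
              · simp at h1
            · exact hb2c a h1
          · intro hcon
            have hdmem := hcon ⟨hdc, hdD⟩
            rcases (Walk.mem_support_append_iff _ _).mp hdmem.1 with h1 | h1
            · rw [Walk.support_reverse, List.mem_reverse] at h1
              exact hda2 h1
            rcases (Walk.mem_support_append_iff _ _).mp h1 with h1 | h1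
            · simp only [Walk.support_cons, Walk.support_nil, List.mem_cons,
                List.mem_singleton] at h1
              rcases h1 with rfl | rfl | h1
              · exact hdx' rfl
              · exact hdy' rfl
              · simp at h1
            · exact hdb2 h1
      · -- replacement via crit2
        have htoIns : ∀ (a : ↥H.verts), ((a : V) ∈ D ∨ a = x' ∨ a = y') →
            (a : V) ∈ insert (x' : V) (insert (y' : V) D) := by
          rintro a (h | rfl | rfl)
          · exact Set.mem_insert_of_mem _ (Set.mem_insert_of_mem _ h)
          · exact Set.mem_insert _ _
          · exact Set.mem_insert_of_mem _ (Set.mem_insert _ _)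
        have hPP : ParityPathIn H (x' : V) (y' : V)
            (insert (x' : V) (insert (y' : V) D)) p₀ := by
          have hsegin : ∀ a ∈ (a1.reverse.append b1).support,
              (a : V) ∈ D ∨ a = x' ∨ a = y' := by
            intro a ha
            rcases (Walk.mem_support_append_iff _ _).mp ha with h1 | h1
            · rw [Walk.support_reverse, List.mem_reverse] at h1
              exact hsegsub a (Or.inl h1)
            · exact hsegsub a (Or.inr h1)
          have hseglen : (a1.reverse.append b1).length = a1.length + b1.length := by
            rw [Walk.length_append, Walk.length_reverse]
          rcases exists_parity_path_or_odd (a1.reverse.append b1) with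
            ⟨π, hπpath, hπpar, hπsub⟩ | ⟨a'', cc, hccodd, hccsub⟩
          · refine ⟨x'.2, y'.2, π, hπpath, ?_, fun a ha => htoIns a (hsegin a (hπsub a ha))⟩
            rw [hseglen] at hπpar
            rw [hp₀def]
            exact hπpar
          · obtain ⟨a3, c3, hc3cyc, hc3odd, hc3sub⟩ := odd_closed_walk_to_cycle cc hccodd
            have hc3in : ∀ a ∈ c3.support, (a : V) ∈ D ∨ a = x' ∨ a = y' :=
              fun a ha => hsegin a (hccsub a (hc3sub a ha))
            by_cases hx3 : x' ∈ c3.support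
            · by_cases hy3 : y' ∈ c3.support
              · have hc3len : 0 < c3.length := by rw [Nat.odd_iff] at hc3odd; omega
                have hc4cyc := hc3cyc.rotate hx3
                have hc4len : (c3.rotate x' hx3).length = c3.length := length_rotate c3 hx3
                have hc4mem : ∀ a : ↥H.verts, a ∈ (c3.rotate x' hx3).support ↔
                    a ∈ c3.support := fun a => mem_support_rotate c3 hx3 hc3len
                have hy4 : y' ∈ (c3.rotate x' hx3).support := (hc4mem y').mpr hy3
                obtain ⟨s1, s2, hs1p, hs2p, hslen, hs1sub, hs2sub⟩ :=
                  cycle_split (c3.rotate x' hx3) hc4cyc hy4 (fun h => hxy' h.symm)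
                have hs1in : ∀ a ∈ s1.support, (a : V) ∈ D ∨ a = x' ∨ a = y' :=
                  fun a ha => hc3in a ((hc4mem a).mp (hs1sub a ha))
                have hs2in : ∀ a ∈ s2.support, (a : V) ∈ D ∨ a = x' ∨ a = y' :=
                  fun a ha => hc3in a ((hc4mem a).mp (hs2sub a ha))
                by_cases hs1par : s1.length % 2 = p₀
                · exact ⟨x'.2, y'.2, s1, hs1p, hs1par,
                    fun a ha => htoIns a (hs1in a ha)⟩
                · refine ⟨x'.2, y'.2, s2.reverse, hs2p.reverse, ?_, ?_⟩
                  · rw [Walk.length_reverse]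
                    rw [Nat.odd_iff] at hc3odd
                    rw [hp₀def] at hs1par ⊢
                    omega
                  · intro a ha
                    rw [Walk.support_reverse, List.mem_reverse] at ha
                    exact htoIns a (hs2in a ha)
              · have hOC : OddCycleIn H (insert (x' : V) D) := by
                  refine ⟨a3, c3, hc3cyc, hc3odd, fun a ha => ?_⟩
                  rcases hc3in a ha with h | h | h
                  · exact Set.mem_insert_of_mem _ h
                  · rw [h]; exact Set.mem_insert _ _
                  · exact absurd (h ▸ ha) hy3
                exact (kill1 hD v₀ S hfree PS hSR x' hx'XC hx'S hx'R
                  (crit1 (x' : V) hx'XC hwitx hOC)).elim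
            · by_cases hy3 : y' ∈ c3.support
              · have hOC : OddCycleIn H (insert (y' : V) D) := by
                  refine ⟨a3, c3, hc3cyc, hc3odd, fun a ha => ?_⟩
                  rcases hc3in a ha with h | h | h
                  · exact Set.mem_insert_of_mem _ h
                  · exact absurd (h ▸ ha) hx3
                  · rw [h]; exact Set.mem_insert _ _
                exact (kill1 hD v₀ S hfree PS hSR y' hy'XC hy'S hy'R
                  (crit1 (y' : V) hy'XC hwity hOC)).elim
              · refine (hfree a3 c3 (fun a ha => ?_) hc3odd).elim
                rcases hc3in a ha with h | h | h
                · exact fun hX => hDXC h hX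
                · exact absurd (h ▸ ha) hx3
                · exact absurd (h ▸ ha) hy3
        have hz2 := crit2 (x' : V) hx'XC (y' : V) hy'XC
          (fun h => hxy' (Subtype.ext h)) hwitx hwity p₀ hPP
        have hR2 : ∀ A ∈ {D' : Set V | IsDelComp H XC D' ∧ D' ≠ D ∧
            ParityPathIn H (x' : V) (y' : V)
              (insert (x' : V) (insert (y' : V) D')) p₀},
            ∃ a ∈ A, ∃ (ha : a ∈ H.verts), H.coe.Reachable ⟨a, ha⟩ v₀ := by
          intro A hA
          obtain ⟨a, haA, har⟩ := parityPathIn_anatomy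
            (fun h => hxy' h) hbp hA.2.2
          exact ⟨(a : V), haA, a.2, har.trans hx'R⟩
        obtain ⟨A, hA, hAfree⟩ := cnt_exists_free v₀ S hSR _ hz2 (fun A hA => hA.1) hR2
        obtain ⟨hx'', hy'', πA, hπApath, hπApar, hπAsub⟩ := hA.2.2
        have hex : (⟨(x' : V), hx''⟩ : ↥H.verts) = x' := Subtype.ext rfl
        have hey : (⟨(y' : V), hy''⟩ : ↥H.verts) = y' := Subtype.ext rfl
        set πA' := πA.copy hex hey with hπA'def
        have hπA'len : πA'.length = πA.length := by simp [hπA'def]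
        have hπA'sup : ∀ a, a ∈ πA'.support ↔ a ∈ πA.support := by
          intro a; simp [hπA'def]
        have hπA'in : ∀ a ∈ πA'.support, a = x' ∨ a = y' ∨ (a : V) ∈ A := by
          intro a ha
          have h1 := hπAsub a ((hπA'sup a).mp ha)
          rcases Set.mem_insert_iff.mp h1 with h2 | h2
          · exact Or.inl (Subtype.ext h2)
          rcases Set.mem_insert_iff.mp h2 with h3 | h3
          · exact Or.inr (Or.inl (Subtype.ext h3))
          · exact Or.inr (Or.inr h3)
        have hAnotD : ∀ {a : V}, a ∈ A → a ∉ D := by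
          intro a haA haD
          exact hA.2.1 (DelComp.eq_of_mem hA.1 hD haA haD)
        refine ⟨x, a2.reverse.append (πA'.append b2), ?_, ?_, ?_⟩
        · simp only [Walk.length_append, Walk.length_reverse]
          rw [Nat.odd_iff] at hodd ⊢
          rw [hπA'len]
          have h6 : πA.length % 2 = p₀ := hπApar
          rw [hp₀def] at h6
          omega
        · intro a ha
          rcases (Walk.mem_support_append_iff _ _).mp ha with h1 | h1
          · rw [Walk.support_reverse, List.mem_reverse] at h1
            exact hcS a (ha2c a h1)
          rcases (Walk.mem_support_append_iff _ _).mp h1 with h1 | h1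
          · rcases hπA'in a h1 with rfl | rfl | h2
            · exact hx'S
            · exact hy'S
            · exact fun haS => hAfree a haS h2
          · exact hcS a (hb2c a h1)
        · rw [Set.ssubset_def]
          constructor
          · rintro a ⟨ha1, ha2⟩
            refine ⟨?_, ha2⟩
            rcases (Walk.mem_support_append_iff _ _).mp ha1 with h1 | h1
            · rw [Walk.support_reverse, List.mem_reverse] at h1
              exact ha2c a h1
            rcases (Walk.mem_support_append_iff _ _).mp h1 with h1 | h1
            · rcases hπA'in a h1 with rfl | rfl | h2
              · exact absurd ha2 (hXCnotD hx'XC)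
              · exact absurd ha2 (hXCnotD hy'XC)
              · exact absurd ha2 (hAnotD h2)
            · exact hb2c a h1
          · intro hcon
            have hdmem := hcon ⟨hdc, hdD⟩
            rcases (Walk.mem_support_append_iff _ _).mp hdmem.1 with h1 | h1
            · rw [Walk.support_reverse, List.mem_reverse] at h1
              exact hda2 h1
            rcases (Walk.mem_support_append_iff _ _).mp h1 with h1 | h1
            · rcases hπA'in d h1 with rfl | rfl | h2
              · exact hdx' rfl
              · exact hdy' rfl
              · exact absurd hdD (hAnotD h2)
            · exact hdb2 h1

theorem caseB (hD : IsDelComp H XC D) (v₀ : ↥H.verts) (hv₀ : (v₀ : V) ∈ D)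
    (S : Set ↥H.verts)
    (hfree : ∀ (u : ↥H.verts) (w : H.coe.Walk u u),
      (∀ a ∈ w.support, (a : V) ∉ XC) → ¬ Odd w.length)
    (PS : ∀ (u : ↥H.verts) (w : H.coe.Walk u u),
      (∀ a ∈ w.support, a ∉ S ∧ (a : V) ∉ D) → ¬ Odd w.length)
    (hSR : {a : ↥H.verts | a ∈ S ∧ H.coe.Reachable a v₀}.ncard < z)
    (crit1 : ∀ x ∈ XC, (∃ d ∈ D, SameCompH H x d) →
      OddCycleIn H (insert x D) →
      z ≤ {D' : Set V | IsDelComp H XC D' ∧ D' ≠ D ∧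
            OddCycleIn H (insert x D')}.ncard)
    (crit2 : ∀ x ∈ XC, ∀ y ∈ XC, x ≠ y →
      (∃ d ∈ D, SameCompH H x d) → (∃ d ∈ D, SameCompH H y d) →
      ∀ p : ℕ, ParityPathIn H x y (insert x (insert y D)) p →
        z ≤ {D' : Set V | IsDelComp H XC D' ∧ D' ≠ D ∧
              ParityPathIn H x y (insert x (insert y D')) p}.ncard) :
    ∀ (u : ↥H.verts) (w : H.coe.Walk u u), (∀ a ∈ w.support, a ∉ S) → ¬ Odd w.length := by
  classical
  suffices Hk : ∀ (k : ℕ) (u : ↥H.verts) (w : H.coe.Walk u u), (∀ a ∈ w.support, a ∉ S) →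
      Odd w.length → {a : ↥H.verts | a ∈ w.support ∧ (a : V) ∈ D}.ncard ≤ k → False by
    intro u w hS hodd
    exact Hk _ u w hS hodd le_rfl
  intro k
  induction k with
  | zero =>
    intro u w hS hodd hk
    refine PS u w (fun a ha => ⟨hS a ha, fun haD => ?_⟩) hodd
    have h1 : {a : ↥H.verts | a ∈ w.support ∧ (a : V) ∈ D}.Nonempty := ⟨a, by exact ⟨ha, haD⟩⟩
    have h2 := (Set.ncard_pos (Set.toFinite _)).mpr h1
    omega
  | succ k ih =>
    intro u w hS hodd hk
    obtain ⟨v, c, hcyc, hcodd, hcsub⟩ := odd_closed_walk_to_cycle w hodd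
    have hcS : ∀ a ∈ c.support, a ∉ S := fun a ha => hS a (hcsub a ha)
    have hMc : {a : ↥H.verts | a ∈ c.support ∧ (a : V) ∈ D}.ncard ≤ k + 1 :=
      le_trans (Set.ncard_le_ncard
        (fun a ha => by exact ⟨hcsub a ha.1, ha.2⟩) (Set.toFinite _)) hk
    by_cases hMD : ∀ a ∈ c.support, (a : V) ∉ D
    · exact PS v c (fun a ha => ⟨hcS a ha, hMD a ha⟩) hcodd
    push_neg at hMD
    obtain ⟨d, hdc, hdD⟩ := hMD
    have hreach : ∀ a ∈ c.support, H.coe.Reachable a v₀ := by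
      intro a ha
      have h1 := (mem_support_reachable c ha).symm.trans (mem_support_reachable c hdc)
      exact h1.trans (DelComp.conn hD d v₀ hdD hv₀)
    have hxex : ∃ x ∈ c.support, (x : V) ∈ XC := by
      by_contra hno
      push_neg at hno
      exact hfree v c hno hcodd
    obtain ⟨x, hxc, hxXC⟩ := hxex
    have hclen : 0 < c.length := by rw [Nat.odd_iff] at hcodd; omega
    have hc2cyc := hcyc.rotate hxc
    have hc2len : (c.rotate x hxc).length = c.length := length_rotate c hxc
    have hc2mem : ∀ a : ↥H.verts, a ∈ (c.rotate x hxc).support ↔ a ∈ c.support :=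
      fun a => mem_support_rotate c hxc hclen
    obtain ⟨u', w', hw'odd, hw'S, hw'ss⟩ := surgery hD v₀ hv₀ S hfree PS hSR crit1 crit2
      x hxXC (c.rotate x hxc) hc2cyc (by rwa [hc2len]) (fun a ha => hcS a ((hc2mem a).mp ha))
      (fun a ha => hreach a ((hc2mem a).mp ha)) d ((hc2mem d).mpr hdc) hdD
    have hset : {a : ↥H.verts | a ∈ (c.rotate x hxc).support ∧ (a : V) ∈ D} =
        {a : ↥H.verts | a ∈ c.support ∧ (a : V) ∈ D} := by
      ext a
      simp only [Set.mem_setOf_eq, hc2mem]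
    rw [hset] at hw'ss
    have hlt := Set.ncard_lt_ncard hw'ss (Set.toFinite _)
    exact ih u' w' hw'S hw'odd (by omega)

end E1

/-- **Redundant components of a certificate.** If `H` is an `XC`-certificate of order `z`
and `D` is a component of `H − XC` such that (1) every `x ∈ XC` in the component of `H`
containing `D` for which `H[{x} ∪ D]` has an odd cycle also has `z` further components
`D' ≠ D` with an odd cycle in `H[{x} ∪ D']`, and (2) every pair `x ≠ y` of such vertices
and each parity `p` for which `H[{x,y} ∪ D]` has an `x`–`y` path of parity `p` also has
`z` further components `D' ≠ D` providing such a path, then `oct(H) = oct(H − D)`. -/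
theorem redundant_component {V : Type} [Fintype V] (G : SimpleGraph V)
    (H : G.Subgraph) (XC : Set V) (z : ℕ) (hcert : IsCert G H XC z)
    (D : Set V) (hD : IsDelComp H XC D)
    (crit1 : ∀ x ∈ XC, (∃ d ∈ D, SameCompH H x d) →
      OddCycleIn H (insert x D) →
      z ≤ {D' : Set V | IsDelComp H XC D' ∧ D' ≠ D ∧
            OddCycleIn H (insert x D')}.ncard)
    (crit2 : ∀ x ∈ XC, ∀ y ∈ XC, x ≠ y →
      (∃ d ∈ D, SameCompH H x d) → (∃ d ∈ D, SameCompH H y d) →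
      ∀ p : ℕ, ParityPathIn H x y (insert x (insert y D)) p →
        z ≤ {D' : Set V | IsDelComp H XC D' ∧ D' ≠ D ∧
              ParityPathIn H x y (insert x (insert y D')) p}.ncard) :
    oct H.coe = oct (H.deleteVerts D).coe := by
  classical
  obtain ⟨hXCsub, hOCT, hOPT, hzv⟩ := hcert
  have hIsOCT : ∀ {W' : Type} {Γ : SimpleGraph W'} {SS : Set W'}, IsOCT Γ SS ↔
      ∀ (u : W') (w : Γ.Walk u u), (∀ x ∈ w.support, x ∉ SS) → ¬ Odd w.length := by
    intro W' Γ SS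
    exact induce_colorable_iff (A := SSᶜ)
  have hfree' : ∀ (u : ↥H.verts) (w : H.coe.Walk u u),
      (∀ a ∈ w.support, (a : V) ∉ XC) → ¬ Odd w.length := hIsOCT.mp hOCT
  have hXC'card : ({x : ↥H.verts | (x : V) ∈ XC}).ncard = XC.ncard := by
    have himg : Subtype.val '' {x : ↥H.verts | (x : V) ∈ XC} = XC := by
      ext a
      constructor
      · rintro ⟨b, hb, rfl⟩; exact hb
      · intro ha; exact ⟨⟨a, hXCsub ha⟩, ha, rfl⟩
    have h2 := Set.ncard_image_of_injective {x : ↥H.verts | (x : V) ∈ XC}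
      Subtype.val_injective
    rw [himg] at h2
    exact h2.symm
  have hoct1 : oct H.coe = XC.ncard := by
    apply le_antisymm
    · exact Nat.sInf_le ⟨{x : ↥H.verts | (x : V) ∈ XC}, hXC'card, hOCT⟩
    · refine le_csInf ⟨XC.ncard, {x : ↥H.verts | (x : V) ∈ XC}, hXC'card, hOCT⟩ ?_
      rintro n ⟨SS, rfl, hSO⟩
      exact hOPT SS hSO
  rw [hoct1]
  have hDsub := DelComp.subset hD
  obtain ⟨d0, hd0⟩ := DelComp.nonempty hD
  set v₀ : ↥H.verts := ⟨d0, (hDsub hd0).1⟩ with hv₀def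
  have hv₀D : (v₀ : V) ∈ D := hd0
  have hXCD : ∀ {a : V}, a ∈ XC → a ∉ D := fun ha hD' => (hDsub hD').2 ha
  -- the lifted transversal on the deleted graph
  have hXC''card : ({x : ↥((H.deleteVerts D).verts) | (x : V) ∈ XC}).ncard = XC.ncard := by
    have himg : Subtype.val '' {x : ↥((H.deleteVerts D).verts) | (x : V) ∈ XC} = XC := by
      ext a
      constructor
      · rintro ⟨b, hb, rfl⟩; exact hb
      · intro ha; exact ⟨⟨a, ⟨hXCsub ha, hXCD ha⟩⟩, ha, rfl⟩
    have h2 := Set.ncard_image_of_injective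
      {x : ↥((H.deleteVerts D).verts) | (x : V) ∈ XC} Subtype.val_injective
    rw [himg] at h2
    exact h2.symm
  have hXC''OCT : IsOCT (H.deleteVerts D).coe
      {x : ↥((H.deleteVerts D).verts) | (x : V) ∈ XC} := by
    rw [hIsOCT]
    intro u w hsup hodd
    obtain ⟨w', hl, hs⟩ := del_walk_down w
    refine hfree' _ w' (fun a ha => ?_) (by rwa [hl])
    obtain ⟨y, hy, hy2⟩ := hs a ha
    have := hsup y hy
    rw [← hy2]
    exact this
  apply le_antisymm
  · -- XC.ncard ≤ oct of deleted graph
    refine le_csInf ⟨XC.ncard, _, hXC''card, hXC''OCT⟩ ?_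
    rintro n ⟨S', rfl, hS'⟩
    set S : Set ↥H.verts := {a | (a : V) ∈ Subtype.val '' S'} with hSdef
    have hScard : S.ncard = S'.ncard := by
      have h1 : Subtype.val '' S = Subtype.val '' S' := by
        ext a
        constructor
        · rintro ⟨b, hb, rfl⟩; exact hb
        · rintro ⟨b, hb, rfl⟩
          exact ⟨⟨b.1, b.2.1⟩, ⟨b, hb, rfl⟩, rfl⟩
      calc S.ncard = (Subtype.val '' S).ncard :=
            (Set.ncard_image_of_injective _ Subtype.val_injective).symm
        _ = (Subtype.val '' S').ncard := by rw [h1]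
        _ = S'.ncard := Set.ncard_image_of_injective _ Subtype.val_injective
    have hS'walk := hIsOCT.mp hS'
    have PS : ∀ (u : ↥H.verts) (w : H.coe.Walk u u),
        (∀ a ∈ w.support, a ∉ S ∧ (a : V) ∉ D) → ¬ Odd w.length := by
      intro u w hsup hodd
      have huD : (u : V) ∉ D := (hsup u w.start_mem_support).2
      obtain ⟨w2, hl2, hs2⟩ := del_walk_up w (fun x hx => (hsup x hx).2) huD huD
      refine hS'walk _ w2 (fun x hx hxS' => ?_) (by rwa [hl2])
      obtain ⟨y, hy, hy2⟩ := hs2 x hx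
      refine (hsup y hy).1 ?_
      show (y : V) ∈ Subtype.val '' S'
      rw [hy2]
      exact ⟨x, hxS', rfl⟩
    rw [← hScard]
    set R : Set ↥H.verts := {a | H.coe.Reachable a v₀} with hRdef
    have hzR : ({x : ↥H.verts | (x : V) ∈ XC} ∩ R).ncard ≤ z := by
      refine le_trans (le_of_eq ?_) (hzv v₀)
      congr 1
      ext a
      simp only [Set.mem_inter_iff, Set.mem_setOf_eq, hRdef]
      tauto
    by_cases hcase : (S ∩ R).ncard < ({x : ↥H.verts | (x : V) ∈ XC} ∩ R).ncard
    · -- Case B : use the surgery machinery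
      have hSR : {a : ↥H.verts | a ∈ S ∧ H.coe.Reachable a v₀}.ncard < z := by
        have hEq : {a : ↥H.verts | a ∈ S ∧ H.coe.Reachable a v₀} = S ∩ R := by
          ext a
          simp only [Set.mem_inter_iff, Set.mem_setOf_eq, hRdef]
        rw [hEq]
        omega
      have hSOCT := caseB hD v₀ hv₀D S hfree' PS hSR crit1 crit2
      exact hOPT S (hIsOCT.mpr hSOCT)
    · -- Case A : replace S inside the component by XC
      push_neg at hcase
      set T := (S \ R) ∪ ({x : ↥H.verts | (x : V) ∈ XC} ∩ R) with hTdef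
      have hTOCT : ∀ (u : ↥H.verts) (w : H.coe.Walk u u),
          (∀ a ∈ w.support, a ∉ T) → ¬ Odd w.length := by
        intro u w hsup hodd
        by_cases hmR : ∃ a ∈ w.support, a ∈ R
        · obtain ⟨a0, ha0w, ha0R⟩ := hmR
          have hallR : ∀ a ∈ w.support, a ∈ R := by
            intro a ha
            have h1 := (mem_support_reachable w ha).symm.trans
              (mem_support_reachable w ha0w)
            exact h1.trans ha0R
          refine hfree' u w (fun a ha haX => ?_) hodd
          exact hsup a ha (Or.inr ⟨haX, hallR a ha⟩)
        · push_neg at hmR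
          refine PS u w (fun a ha => ⟨?_, ?_⟩) hodd
          · intro haS
            by_cases haR : a ∈ R
            · exact hmR a ha haR
            · exact hsup a ha (Or.inl ⟨haS, haR⟩)
          · intro haD
            exact hmR a ha (DelComp.conn hD a v₀ haD hv₀D)
      have hTbound := hOPT T (hIsOCT.mpr hTOCT)
      have h1 : T.ncard ≤ (S \ R).ncard + ({x : ↥H.verts | (x : V) ∈ XC} ∩ R).ncard :=
        Set.ncard_union_le _ _
      have h2 : (S \ (S ∩ R)).ncard + (S ∩ R).ncard = S.ncard :=
        Set.ncard_diff_add_ncard_of_subset Set.inter_subset_left (Set.toFinite _)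
      have h3 : S \ (S ∩ R) = S \ R := by
        ext a
        simp only [Set.mem_diff, Set.mem_inter_iff]
        tauto
      rw [h3] at h2
      omega
  · exact Nat.sInf_le ⟨_, hXC''card, hXC''OCT⟩
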